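/- arXiv:2312.00088 — 3 statements merged into one kernel-verified Lean document; each statement's English description precedes it below -/
import Mathlib

section
/- For any probability vector π in [0,1]^M with entries summing to 1, the function L(π) = Σ_i π_i log(π_i/(1-π_i)) is minimized uniquely at the uniform distribution π = (1/M,...,1/M), assuming M ≥ 2. -/
open Real Finset

private lemma strictConvexOn_congr {s : Set ℝ} {f g : ℝ → ℝ}
    (hf : StrictConvexOn ℝ s f) (h : ∀ x ∈ s, f x = g x) : StrictConvexOn ℝ s g := by
  refine ⟨hf.1, fun x hx y hy hxy a b ha hb hab => ?_⟩
  rw [← h x hx, ← h y hy, ← h _ (hf.1 hx hy ha.le hb.le hab)]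
  exact hf.2 hx hy hxy ha hb hab

private lemma llr_strictConvex :
    StrictConvexOn ℝ (Set.Ico (0:ℝ) 1) (fun x => x * Real.log (x / (1 - x))) := by
  set a : ℝ →ᵃ[ℝ] ℝ := AffineMap.const ℝ ℝ (1:ℝ) - AffineMap.id ℝ ℝ with ha
  have haeq : ∀ x : ℝ, a x = 1 - x := fun x => rfl
  have g1 : StrictConvexOn ℝ (Set.Ico (0:ℝ) 1) (fun x => x * Real.log x) :=
    Real.strictConvexOn_mul_log.subset Set.Ico_subset_Ici_self (convex_Ico 0 1)
  have g2 : ConvexOn ℝ (Set.Ico (0:ℝ) 1) (fun x => (1 - x) * Real.log (1 - x)) := by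
    have := (Real.convexOn_mul_log.comp_affineMap a).subset
      (fun x hx => by
        simp only [Set.mem_preimage, haeq, Set.mem_Ici, Set.mem_Ico] at *
        linarith [hx.2]) (convex_Ico 0 1)
    simpa [Function.comp_def, haeq] using this
  have g3 : ConvexOn ℝ (Set.Ico (0:ℝ) 1) (fun x => -Real.log (1 - x)) := by
    have := ((strictConcaveOn_log_Ioi.concaveOn.neg).comp_affineMap a).subset
      (fun x hx => by
        simp only [Set.mem_preimage, haeq, Set.mem_Ioi, Set.mem_Ico] at *
        linarith [hx.2]) (convex_Ico 0 1)
    simpa [Function.comp_def, haeq] using this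
  have hF : StrictConvexOn ℝ (Set.Ico (0:ℝ) 1)
      (fun x => x * Real.log x + ((1 - x) * Real.log (1 - x) + -Real.log (1 - x))) :=
    g1.add_convexOn (g2.add g3)
  refine strictConvexOn_congr hF fun x hx => ?_
  obtain ⟨hx0, hx1⟩ := hx
  rcases eq_or_lt_of_le hx0 with h | h
  · simp [← h]
  · have h1x : (0:ℝ) < 1 - x := by linarith
    rw [Real.log_div (ne_of_gt h) (ne_of_gt h1x)]
    ring

theorem stmt_0 (M : ℕ) (hM : 2 ≤ M) (pv : Fin M → ℝ)
    (h0 : ∀ i, 0 ≤ pv i) (h1 : ∀ i, pv i < 1) (hs : ∑ i, pv i = 1) :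
    (∑ i : Fin M, (1 / M : ℝ) * Real.log ((1 / M) / (1 - 1 / M))) ≤
      ∑ i, pv i * Real.log (pv i / (1 - pv i)) ∧
    ((∑ i, pv i * Real.log (pv i / (1 - pv i)) =
        ∑ i : Fin M, (1 / M : ℝ) * Real.log ((1 / M) / (1 - 1 / M))) ↔
      pv = fun _ => (1 : ℝ) / M) := by
  have hMpos : (0:ℝ) < M := by positivity
  have hMne : (M:ℝ) ≠ 0 := ne_of_gt hMpos
  set f : ℝ → ℝ := fun x => x * Real.log (x / (1 - x)) with hf
  set w : Fin M → ℝ := fun _ => 1 / (M:ℝ) with hw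
  have h₀ : ∀ i ∈ (univ : Finset (Fin M)), 0 < w i := fun i _ => by positivity
  have h₁ : ∑ i : Fin M, w i = 1 := by
    simp [hw, Finset.sum_const, Finset.card_univ]
    field_simp
  have hmem : ∀ i ∈ (univ : Finset (Fin M)), pv i ∈ Set.Ico (0:ℝ) 1 :=
    fun i _ => ⟨h0 i, h1 i⟩
  have hcm : ∑ i : Fin M, w i • pv i = 1 / (M:ℝ) := by
    simp only [hw, smul_eq_mul, ← Finset.mul_sum, hs, mul_one]
  have hle : f (1 / (M:ℝ)) ≤ (1 / (M:ℝ)) * ∑ i, f (pv i) := by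
    have := llr_strictConvex.convexOn.map_sum_le (fun i _ => (h₀ i (mem_univ i)).le) h₁ hmem
    rw [hcm] at this
    simpa [hw, Finset.mul_sum] using this
  have hLHS : (∑ i : Fin M, (1 / M : ℝ) * Real.log ((1 / M) / (1 - 1 / M)))
      = (M:ℝ) * f (1 / (M:ℝ)) := by
    simp [hf, Finset.sum_const, Finset.card_univ]
  constructor
  · rw [hLHS]
    calc (M:ℝ) * f (1 / (M:ℝ)) ≤ (M:ℝ) * ((1 / (M:ℝ)) * ∑ i, f (pv i)) := by
          exact mul_le_mul_of_nonneg_left hle hMpos.le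
      _ = ∑ i, f (pv i) := by field_simp
  · rw [hLHS]
    have hiff := llr_strictConvex.map_sum_eq_iff h₀ h₁ hmem
    rw [hcm] at hiff
    constructor
    · intro heq
      have : f (1 / (M:ℝ)) = ∑ i : Fin M, w i • f (pv i) := by
        simp only [hw, smul_eq_mul, ← Finset.mul_sum]
        rw [heq]; field_simp
      have hall := hiff.mp this
      funext j
      exact hall j (mem_univ j)
    · intro heq
      rw [heq]
      simp only [hw, hf]
      rw [Finset.sum_const, Finset.card_univ, Fintype.card_fin, nsmul_eq_mul]
end

section
/- For any probability vector π in [0,1]^M summing to 1, L(π) ≥ L((1/M)·1), i.e., L(π) - L((1/M)1) = Σ_i π_i log(π_i(M-1)/(1-π_i)) ≥ 0. -/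
open Real Finset

theorem stmt_1 (M : ℕ) (hM : 2 ≤ M) (pv : Fin M → ℝ)
    (h0 : ∀ i, 0 ≤ pv i) (h1 : ∀ i, pv i < 1) (hs : ∑ i, pv i = 1) :
    0 ≤ ∑ i, pv i * Real.log (pv i * (M - 1) / (1 - pv i)) := by
  have hM1 : (0:ℝ) < (M:ℝ) - 1 := by
    have : (2:ℝ) ≤ (M:ℝ) := by exact_mod_cast hM
    linarith
  have key : ∀ i, pv i - (1 - pv i) / ((M:ℝ) - 1) ≤
      pv i * Real.log (pv i * (M - 1) / (1 - pv i)) := by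
    intro i
    have hp1 : 0 < 1 - pv i := by linarith [h1 i]
    rcases eq_or_lt_of_le (h0 i) with h | h
    · rw [← h]
      simp
      omega
    · have hx : 0 < (1 - pv i) / (pv i * ((M:ℝ) - 1)) := by positivity
      have hlog := Real.log_le_sub_one_of_pos hx
      have hne : pv i * (M - 1) / (1 - pv i) ≠ 0 := by positivity
      have hrw : Real.log (pv i * (M - 1) / (1 - pv i)) =
          - Real.log ((1 - pv i) / (pv i * ((M:ℝ) - 1))) := by
        rw [← Real.log_inv]
        congr 1
        field_simp
      rw [hrw]
      have h2 : pv i * Real.log ((1 - pv i) / (pv i * ((M:ℝ) - 1))) ≤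
          pv i * ((1 - pv i) / (pv i * ((M:ℝ) - 1)) - 1) :=
        mul_le_mul_of_nonneg_left hlog (le_of_lt h)
      have h3 : pv i * ((1 - pv i) / (pv i * ((M:ℝ) - 1)) - 1) =
          (1 - pv i) / ((M:ℝ) - 1) - pv i := by
        field_simp
      nlinarith [h2, h3.symm]
  calc (0:ℝ) = ∑ i, (pv i - (1 - pv i) / ((M:ℝ) - 1)) := by
        rw [Finset.sum_sub_distrib, ← Finset.sum_div]
        simp only [Finset.sum_sub_distrib, Finset.sum_const, Finset.card_univ, Fintype.card_fin,
          nsmul_eq_mul, mul_one, hs]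
        field_simp
        ring
    _ ≤ _ := Finset.sum_le_sum (fun i _ => key i)
end

section
/- If M ≥ 2 and π is a probability vector of length M with all entries strictly less than 1, then L(π) ≥ log(1/(M-1)) = -log(M-1). -/
open Real Finset

theorem stmt_6 (M : ℕ) (hM : 2 ≤ M) (pv : Fin M → ℝ)
    (h0 : ∀ i, 0 ≤ pv i) (h1 : ∀ i, pv i < 1) (hs : ∑ i, pv i = 1) :
    -Real.log (M - 1) ≤ ∑ i, pv i * Real.log (pv i / (1 - pv i)) := by
  classical
  set s : Finset (Fin M) := Finset.univ.filter (fun i => pv i ≠ 0) with hsdef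
  have hmem : ∀ i ∈ s, 0 < pv i := by
    intro i hi
    rw [hsdef, Finset.mem_filter] at hi
    exact lt_of_le_of_ne (h0 i) (Ne.symm hi.2)
  have hsum_s : ∑ i ∈ s, pv i = 1 := by
    rw [hsdef, Finset.sum_filter_ne_zero, hs]
  -- support has at least 2 elements
  have hne : s.Nonempty := by
    by_contra h
    rw [Finset.not_nonempty_iff_eq_empty] at h
    rw [h, Finset.sum_empty] at hsum_s
    norm_num at hsum_s
  have hcard2 : 2 ≤ s.card := by
    by_contra h
    push_neg at h
    interval_cases hc : s.card
    · exact absurd (Finset.card_eq_zero.mp hc ▸ hne) (by simp)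
    · obtain ⟨i, hi⟩ := Finset.card_eq_one.mp hc
      rw [hi, Finset.sum_singleton] at hsum_s
      exact absurd hsum_s (ne_of_lt (h1 i))
  have hcardM : s.card ≤ M := by
    simpa using Finset.card_le_card (Finset.subset_univ s)
  -- the sum over univ equals the sum over s
  have hrw : ∑ i, pv i * Real.log (pv i / (1 - pv i))
      = ∑ i ∈ s, pv i * Real.log (pv i / (1 - pv i)) := by
    rw [hsdef]
    rw [Finset.sum_filter_of_ne]
    exact fun i _ h hz => h (by rw [hz, zero_mul])
  rw [hrw]
  -- rewrite log(p/(1-p)) = - log((1-p)/p)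
  have hrw2 : ∑ i ∈ s, pv i * Real.log (pv i / (1 - pv i))
      = -∑ i ∈ s, pv i * Real.log ((1 - pv i) / pv i) := by
    rw [← Finset.sum_neg_distrib]
    apply Finset.sum_congr rfl
    intro i hi
    rw [show (1 - pv i) / pv i = (pv i / (1 - pv i))⁻¹ by rw [inv_div], Real.log_inv]
    ring
  rw [hrw2, neg_le_neg_iff]
  -- Jensen
  have hjensen : ∑ i ∈ s, pv i • Real.log ((1 - pv i) / pv i)
      ≤ Real.log (∑ i ∈ s, pv i • ((1 - pv i) / pv i)) := by
    apply (strictConcaveOn_log_Ioi.concaveOn).le_map_sum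
    · intro i _; exact h0 i
    · exact hsum_s
    · intro i hi
      exact Set.mem_Ioi.mpr (div_pos (by linarith [h1 i]) (hmem i hi))
  have hval : ∑ i ∈ s, pv i • ((1 - pv i) / pv i) = (s.card : ℝ) - 1 := by
    have : ∀ i ∈ s, pv i • ((1 - pv i) / pv i) = 1 - pv i := by
      intro i hi
      rw [smul_eq_mul]; field_simp [(hmem i hi).ne']
    rw [Finset.sum_congr rfl this, Finset.sum_sub_distrib, hsum_s, Finset.sum_const,
      nsmul_eq_mul, mul_one]
  have h1' : (1 : ℝ) ≤ (s.card : ℝ) - 1 := by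
    have : (2 : ℝ) ≤ (s.card : ℝ) := by exact_mod_cast hcard2
    linarith
  calc ∑ i ∈ s, pv i * Real.log ((1 - pv i) / pv i)
      ≤ Real.log ((s.card : ℝ) - 1) := by
        rw [hval] at hjensen
        simpa [smul_eq_mul] using hjensen
    _ ≤ Real.log ((M : ℝ) - 1) := by
        apply Real.log_le_log (by linarith)
        have : (s.card : ℝ) ≤ (M : ℝ) := by exact_mod_cast hcardM
        linarith
end
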